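/- Let R be a Noetherian one-dimensional local domain and M a finitely generated torsion-free-rank-one R-module. If J is an ideal of R that is a surjective image of M, then tr_R(J) = tr_R(M). -/

import Mathlib

set_option synthInstance.maxHeartbeats 1000000
set_option maxHeartbeats 1000000

open IsLocalRing

/-- The length of an `R`-module `M`, defined as the Krull dimension of its lattice of
submodules (the supremum of lengths of strict chains of submodules), valued in `ℕ∞`. -/
noncomputable def rlength (R M : Type*) [Ring R] [AddCommGroup M] [Module R M] : ℕ∞ :=
  (Order.krullDim (Submodule R M)).unbotD 0

/-- The trace ideal of `M`: the sum of the images of all homomorphisms `M → R`. -/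
noncomputable def traceIdeal (R M : Type*) [CommRing R] [AddCommGroup M] [Module R M] :
    Ideal R :=
  ⨆ f : M →ₗ[R] R, LinearMap.range f

/-- if `M` is a finitely generated rank-one module over a one-dimensional
Noetherian local domain and the ideal `J` is a surjective image of `M`, then
`tr_R(J) = tr_R(M)`. -/
theorem stmt10 (R : Type*) [CommRing R] [IsDomain R] [IsNoetherianRing R] [IsLocalRing R]
    (hdim : ringKrullDim R = 1)
    (M : Type*) [AddCommGroup M] [Module R M] [Module.Finite R M]
    (hrank : Module.finrank (FractionRing R) (TensorProduct R (FractionRing R) M) = 1)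
    (J : Ideal R) (hJ : J ≠ ⊥) (f : M →ₗ[R] R) (hf : LinearMap.range f = J) :
    traceIdeal R J = traceIdeal R M := by
  classical
  set K := FractionRing R
  -- localized module instance
  have hloc : IsLocalizedModule (nonZeroDivisors R) (TensorProduct.mk R K M 1) :=
    (isLocalizedModule_iff_isBaseChange (nonZeroDivisors R) K _).mpr
      (TensorProduct.isBaseChange R M K)
  -- the base-changed map
  let φ : TensorProduct R K M →ₗ[K] K :=
    LinearMap.liftBaseChange K ((Algebra.linearMap R K).comp f)
  have hφne : φ ≠ 0 := by
    obtain ⟨m, hm⟩ : ∃ m : M, f m ≠ 0 := by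
      by_contra h
      push_neg at h
      apply hJ
      rw [← hf, eq_bot_iff]
      rintro x ⟨m, rfl⟩
      simp [h m]
    intro h0
    have := congrArg (fun g => g ((1 : K) ⊗ₜ[R] m)) h0
    simp only [LinearMap.liftBaseChange_tmul, one_smul, LinearMap.zero_apply, φ] at this
    exact hm (by simpa using this)
  have hφinj : Function.Injective φ := by
    rw [← LinearMap.ker_eq_bot]
    have hfin : FiniteDimensional K (TensorProduct R K M) := Module.Finite.base_change R K M
    have h1 := LinearMap.finrank_range_add_finrank_ker φ
    rw [hrank] at h1
    have h2 : LinearMap.range φ ≠ ⊥ := by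
      intro h
      exact hφne (LinearMap.range_eq_bot.mp h)
    have h3 : 0 < Module.finrank K (LinearMap.range φ) :=
      Module.finrank_pos_iff.mpr (Submodule.nontrivial_iff_ne_bot.mpr h2)
    have h4 : Module.finrank K (LinearMap.ker φ) = 0 := by omega
    exact Submodule.finrank_eq_zero.mp h4
  -- every R-linear functional on M kills ker f
  have hker : ∀ (h : M →ₗ[R] R), LinearMap.ker f ≤ LinearMap.ker h := by
    intro h x hx
    have hx0 : (TensorProduct.mk R K M 1) x = 0 := by
      apply hφinj
      simp only [TensorProduct.mk_apply, map_zero]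
      have : φ ((1 : K) ⊗ₜ[R] x) = (1 : K) • algebraMap R K (f x) :=
        LinearMap.liftBaseChange_tmul _ _ _ _
      rw [this, LinearMap.mem_ker.mp hx]
      simp
    obtain ⟨s, hs⟩ := (IsLocalizedModule.eq_zero_iff (nonZeroDivisors R) _).mp hx0
    have hsx : (s : R) • x = 0 := hs
    have : (s : R) * h x = 0 := by
      rw [← smul_eq_mul, ← map_smul, hsx, map_zero]
    rw [LinearMap.mem_ker]
    exact (mul_eq_zero.mp this).resolve_left (nonZeroDivisors.coe_ne_zero s)
  -- the corestriction M → J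
  let f' : M →ₗ[R] J := f.codRestrict (J : Submodule R R) (fun m => hf ▸ ⟨m, rfl⟩)
  have hf'surj : Function.Surjective f' := by
    rintro ⟨x, hx⟩
    rw [← hf] at hx
    obtain ⟨m, rfl⟩ := hx
    exact ⟨m, rfl⟩
  have hkerf' : LinearMap.ker f' = LinearMap.ker f := LinearMap.ker_codRestrict _ _ _
  apply le_antisymm
  · -- tr J ≤ tr M
    refine iSup_le fun g => ?_
    have : LinearMap.range g = LinearMap.range (g ∘ₗ f') := by
      rw [LinearMap.range_comp, LinearMap.range_eq_top.mpr hf'surj, Submodule.map_top]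
    rw [this]
    exact le_iSup (fun h : M →ₗ[R] R => LinearMap.range h) (g ∘ₗ f')
  · -- tr M ≤ tr J
    refine iSup_le fun h => ?_
    have hle : LinearMap.ker f' ≤ LinearMap.ker h := hkerf' ▸ hker h
    let e : (M ⧸ LinearMap.ker f') ≃ₗ[R] J := f'.quotKerEquivOfSurjective hf'surj
    let g : J →ₗ[R] R := ((LinearMap.ker f').liftQ h hle) ∘ₗ e.symm.toLinearMap
    have : LinearMap.range g = LinearMap.range h := by
      rw [LinearMap.range_comp, LinearEquiv.range, Submodule.map_top, Submodule.range_liftQ]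
    rw [← this]
    exact le_iSup (fun g : J →ₗ[R] R => LinearMap.range g) g
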